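/- Let G be a connected graph on [n], n ≥ 3, that is not complete, with diameter d, and let v be a non-simplicial vertex. If v is neither endpoint of a given diameter-realizing shortest path P: v_1,...,v_{d+1}, then d_{G_v − v}(v_1, v_{d+1}) ≥ d − 1. -/

import Mathlib

open SimpleGraph

def completeNeighborhood {V : Type} (G : SimpleGraph V) (v : V) : SimpleGraph V where
  Adj u w := G.Adj u w ∨ (u ≠ w ∧ G.Adj v u ∧ G.Adj v w)
  symm := by
    refine ⟨?_⟩
    intro a b h
    rcases h with h | ⟨h1, h2, h3⟩
    · exact Or.inl h.symm
    · exact Or.inr ⟨h1.symm, h3, h2⟩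
  loopless := by
    refine ⟨?_⟩
    intro a h
    rcases h with h | ⟨h, -⟩
    · exact G.irrefl h
    · exact h rfl

abbrev deleteVert {V : Type} (G : SimpleGraph V) (x : V) :
    SimpleGraph ({x}ᶜ : Set V) :=
  G.induce ({x}ᶜ : Set V)

def IsSimplicial {V : Type} (G : SimpleGraph V) (v : V) : Prop :=
  G.IsClique (G.neighborSet v)

noncomputable def fval {V : Type} (G : SimpleGraph V) : ℕ :=
  {v | IsSimplicial G v}.ncard

noncomputable def ivval {V : Type} (G : SimpleGraph V) : ℕ :=
  {v | ¬ IsSimplicial G v}.ncard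

noncomputable def dval {V : Type} (G : SimpleGraph V) : ℕ :=
  {v | ∀ u, ¬ G.Adj v u}.ncard +
    ∑ᶠ c : G.ConnectedComponent, (G.induce c.supp).diam

lemma walk_lift_bound {V : Type} (G : SimpleGraph V) (hconn : G.Connected) (v : V)
    {x y : ({v}ᶜ : Set V)}
    (W : (deleteVert (completeNeighborhood G v) v).Walk x y) :
    G.dist x.val y.val ≤ W.length ∨
      G.dist x.val v + G.dist v y.val ≤ W.length + 1 := by
  induction W with
  | nil => left; simp
  | @cons x z y h W ih =>
    have hxv : (x : V) ≠ v := x.2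
    have hzv : (z : V) ≠ v := z.2
    have h' : G.Adj x.val z.val ∨ ((x : V) ≠ z ∧ G.Adj v x ∧ G.Adj v z) := h
    rcases ih with ih | ih
    · rcases h' with hG | ⟨_, hvx, hvz⟩
      · left
        calc G.dist x.val y.val ≤ G.dist x.val z.val + G.dist z.val y.val :=
              hconn.dist_triangle
          _ ≤ 1 + W.length := by
              have : G.dist x.val z.val = 1 := dist_eq_one_iff_adj.mpr hG
              omega
          _ = (Walk.cons h W).length := by simp [Nat.add_comm]
      · right
        have h1 : G.dist x.val v = 1 := dist_eq_one_iff_adj.mpr hvx.symm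
        have h2 : G.dist v y.val ≤ G.dist v z.val + G.dist z.val y.val :=
          hconn.dist_triangle
        have h3 : G.dist v z.val = 1 := dist_eq_one_iff_adj.mpr hvz
        simp only [Walk.length_cons]
        omega
    · rcases h' with hG | ⟨_, hvx, hvz⟩
      · right
        have h1 : G.dist x.val v ≤ G.dist x.val z.val + G.dist z.val v :=
          hconn.dist_triangle
        have h2 : G.dist x.val z.val = 1 := dist_eq_one_iff_adj.mpr hG
        simp only [Walk.length_cons]
        omega
      · right
        have h1 : G.dist x.val v = 1 := dist_eq_one_iff_adj.mpr hvx.symm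
        have h3 : G.dist z.val v = 1 := dist_eq_one_iff_adj.mpr hvz.symm
        simp only [Walk.length_cons]
        omega

lemma reach_aux {V : Type} (G : SimpleGraph V) (v : V) :
    ∀ n {x y : V} (W : G.Walk x y), W.length ≤ n → (hx : x ≠ v) → (hy : y ≠ v) →
      (deleteVert (completeNeighborhood G v) v).Reachable ⟨x, hx⟩ ⟨y, hy⟩ := by
  intro n
  induction n with
  | zero =>
    intro x y W hW hx hy
    cases W with
    | nil => exact Reachable.refl _
    | cons h W => simp at hW
  | succ n ih =>
    intro x y W hW hx hy
    cases W with
    | nil => exact Reachable.refl _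
    | @cons _ z _ h W =>
      by_cases hzv : z = v
      · cases W with
        | nil => exact absurd hzv hy
        | @cons _ w _ h2 W2 =>
          by_cases hwv : w = v
          · exact absurd (hzv.trans hwv.symm) h2.ne
          · by_cases hxw : x = w
            · subst hxw
              exact ih W2 (by simp at hW ⊢; omega) hx hy
            · have hadj : (deleteVert (completeNeighborhood G v) v).Adj ⟨x, hx⟩ ⟨w, hwv⟩ :=
                Or.inr ⟨hxw, (hzv ▸ h).symm, hzv ▸ h2⟩
              exact (hadj.reachable).trans (ih W2 (by simp at hW ⊢; omega) hwv hy)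
      · have hadj : (deleteVert (completeNeighborhood G v) v).Adj ⟨x, hx⟩ ⟨z, hzv⟩ :=
          Or.inl h
        exact (hadj.reachable).trans (ih W (by simp at hW ⊢; omega) hzv hy)

/-- if `v` is a non-simplicial vertex which is not an endpoint of a
shortest path `p 0, …, p d` realizing the diameter `d` of a connected non-complete
graph `G` on at least 3 vertices, then `d_{G_v - v}(p 0, p d) ≥ d - 1`. -/
theorem stmt17 {V : Type} [Fintype V] [DecidableEq V] (G : SimpleGraph V)
    (hcard : 3 ≤ Fintype.card V)
    (hconn : G.Connected) (hnc : G ≠ ⊤) (d : ℕ) (hdiam : G.diam = d)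
    (v : V) (hv : ¬ IsSimplicial G v)
    (p : ℕ → V)
    (hadj : ∀ i < d, G.Adj (p i) (p (i + 1)))
    (hinj : ∀ i ≤ d, ∀ j ≤ d, p i = p j → i = j)
    (hdist : G.dist (p 0) (p d) = d)
    (hv0 : v ≠ p 0) (hvd : v ≠ p d)
    (hmem0 : p 0 ∈ ({v}ᶜ : Set V)) (hmemd : p d ∈ ({v}ᶜ : Set V)) :
    d - 1 ≤ (deleteVert (completeNeighborhood G v) v).dist ⟨p 0, hmem0⟩ ⟨p d, hmemd⟩ := by
  obtain ⟨W0⟩ := hconn (p 0) (p d)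
  have hreach := reach_aux G v W0.length W0 le_rfl (Ne.symm hv0) (Ne.symm hvd)
  obtain ⟨W, hW⟩ := hreach.exists_walk_length_eq_dist
  have := walk_lift_bound G hconn v W
  rcases this with h | h
  · have h' : G.dist (p 0) (p d) ≤ W.length := h
    omega
  · have h' : G.dist (p 0) v + G.dist v (p d) ≤ W.length + 1 := h
    have htri : G.dist (p 0) (p d) ≤ G.dist (p 0) v + G.dist v (p d) :=
      hconn.dist_triangle
    omega
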